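/- With the notation above (L(n,α), s = 1/(x^n α(x)), w_{k,i} as defined), the pairing of the rescaled elements satisfies: B(s·w_{k,i}, s·w_{ℓ,j}) = −s_{k+ℓ−n+1} if i=j and 0 ≤ k,ℓ ≤ n−1 and k+ℓ ≥ n−1; B(s·w_{k,i}, s·w_{ℓ,j}) = s_{k+ℓ−n+1} if i=j and k,ℓ ≥ n; and B(s·w_{k,i}, s·w_{ℓ,j}) = 0 otherwise, where s(x) = ∑_k s_k x^k. -/

import Mathlib

noncomputable section ManinCore

open scoped BigOperators
open HahnSeries

variable {F : Type} [Field F] {g : Type} [LieRing g] [LieAlgebra F g] {d n : ℕ}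

/-- A Lie ring viewed as a non-unital non-associative semiring with `*` given by the bracket. -/
@[reducible]
def lieMulStruct (g : Type) [LieRing g] : NonUnitalNonAssocSemiring g :=
  { (inferInstance : AddCommMonoid g) with
    mul := fun a b => ⁅a, b⁆
    left_distrib := fun a b c => lie_add a b c
    right_distrib := fun a b c => add_lie a b c
    zero_mul := zero_lie
    mul_zero := lie_zero }

/-- Convolution Lie bracket on `g`-valued formal (Hahn/Laurent) series `g((x))`. -/
def bracketLau (u v : HahnSeries ℤ g) : HahnSeries ℤ g :=
  letI := lieMulStruct g
  u * v

/-- The truncated Lie bracket on `g[x]/x^n g[x]`, represented as `Fin n → g`. -/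
def bracketTr (p q : Fin n → g) : Fin n → g :=
  fun m => ∑ i : Fin n, ∑ j : Fin n, if (i : ℕ) + (j : ℕ) = (m : ℕ) then ⁅p i, q j⁆ else 0

/-- The Lie algebra `L(n,α) = g((x)) × g[x]/x^n g[x]` (as an `F`-module). -/
abbrev LL (g : Type) [AddCommGroup g] (n : ℕ) := HahnSeries ℤ g × (Fin n → g)

/-- Componentwise bracket on `L(n,α)`. -/
def bracketLL (z w : LL g n) : LL g n := (bracketLau z.1 w.1, bracketTr z.2 w.2)

variable (F g n) in
/-- The diagonal `Δ = {(f,[f]) | f ∈ g[[x]]} ⊆ L(n,α)`. -/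
def Delta [Module F g] : Submodule F (LL g n) where
  carrier := {z | (∀ k : ℤ, k < 0 → z.1.coeff k = 0) ∧ ∀ m : Fin n, z.2 m = z.1.coeff (m : ℤ)}
  add_mem' := by
    rintro a b ⟨ha1, ha2⟩ ⟨hb1, hb2⟩
    refine ⟨fun k hk => ?_, fun m => ?_⟩
    · simp [HahnSeries.coeff_add, ha1 k hk, hb1 k hk]
    · simp [HahnSeries.coeff_add, ha2 m, hb2 m]
  zero_mem' := by
    exact ⟨fun k _ => rfl, fun m => rfl⟩
  smul_mem' := by
    rintro c a ⟨ha1, ha2⟩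
    refine ⟨fun k hk => ?_, fun m => ?_⟩
    · simp [HahnSeries.coeff_smul, ha1 k hk]
    · simp [HahnSeries.coeff_smul, ha2 m]

/-- Residue-type bilinear pairing on the Laurent part: `res₀(α·κ(u,v))`. -/
def BLau (κ : g →ₗ[F] g →ₗ[F] F) (α : LaurentSeries F) (u v : HahnSeries ℤ g) : F :=
  ∑ᶠ (i : ℤ) (j : ℤ), α.coeff i * κ (u.coeff j) (v.coeff (-1 - i - j))

/-- Pairing on the truncated part: `res₀(α·κ(p,q))`. -/
def BTr (κ : g →ₗ[F] g →ₗ[F] F) (α : LaurentSeries F) (p q : Fin n → g) : F :=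
  ∑ i : Fin n, ∑ j : Fin n, α.coeff (-1 - (i : ℕ) - (j : ℕ)) * κ (p i) (q j)

/-- The bilinear form `B` on `L(n,α)`: `B((f,p),(g,q)) = res₀(α(fg − pq))` (κ-valued). -/
def BB (κ : g →ₗ[F] g →ₗ[F] F) (α : LaurentSeries F) (z w : LL g n) : F :=
  BLau κ α z.1 w.1 - BTr κ α z.2 w.2

variable (g n) in
/-- The elements `w_{k,i}` from the expansion of `y^nΩ/(x-y)` in `(L(n,α) ⊗ g)[[y]]`. -/
def wElt (b : Fin d → g) (k : ℕ) (i : Fin d) : LL g n :=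
  if k < n then (0, fun m => if (m : ℕ) = n - 1 - k then -(b i) else 0)
  else (HahnSeries.single ((n : ℤ) - 1 - k) (b i), 0)

/-- Multiplication of a `g`-valued Laurent series by a scalar power series. -/
def psSmulLau (s : PowerSeries F) (u : HahnSeries ℤ g) : HahnSeries ℤ g :=
  (HahnModule.of F).symm ((HahnSeries.ofPowerSeries ℤ F s) • (HahnModule.of F u))

/-- Multiplication of a truncated polynomial by a power series. -/
def psSmulTr (s : PowerSeries F) (p : Fin n → g) : Fin n → g :=
  fun m => ∑ j : Fin n, if (j : ℕ) ≤ (m : ℕ) then (PowerSeries.coeff ((m : ℕ) - j)) s • p j else 0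

/-- Componentwise multiplication of an element of `L(n,α)` by a power series. -/
def psSmulLL (s : PowerSeries F) (z : LL g n) : LL g n := (psSmulLau s z.1, psSmulTr s z.2)

/-- The diagonal monomial `b_i(y^k, [y^k]) ∈ Δ ⊆ L(n,α)`. -/
def diagMono (b : Fin d → g) (k : ℕ) (i : Fin d) : LL g n :=
  (HahnSeries.single (k : ℤ) (b i), fun m => if (m : ℕ) = k then b i else 0)

/-- The `g`-valued Hahn series with coefficients `γ : ℕ → g` in nonnegative degrees. -/
def ofNatCoeff (γ : ℕ → g) : HahnSeries ℤ g :=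
  HahnSeries.embDomain Nat.castOrderEmbedding
    ⟨γ, Set.IsWF.isPWO ((wellFounded_lt).wellFoundedOn :
      (Function.support γ).WellFoundedOn (· < ·))⟩

/-- The diagonal element of `L(n,α)` corresponding to a formal power series with
basis coefficients `γ : ℕ → Fin d → F` (i.e. `∑ γ ℓ j • b_j x^ℓ`). -/
def diagOf [Module F g] (b : Fin d → g) (γ : ℕ → Fin d → F) : LL g n :=
  (ofNatCoeff (fun ℓ => ∑ j, γ ℓ j • b j), fun m => ∑ j, γ (m : ℕ) j • b j)


section AuxLemmas
open Finset

lemma coeff_mul_finsum (A B : HahnSeries ℤ F) (c : ℤ) :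
    ∑ᶠ p : ℤ, A.coeff p * B.coeff (c - p) = (A * B).coeff c := by
  classical
  rw [HahnSeries.coeff_mul]
  have hsub : Function.support (fun p : ℤ => A.coeff p * B.coeff (c - p)) ⊆
      ↑((addAntidiagonal A.isPWO_support B.isPWO_support c).image Prod.fst) := by
    intro p hp
    have h1 : A.coeff p ≠ 0 := left_ne_zero_of_mul hp
    have h2 : B.coeff (c - p) ≠ 0 := right_ne_zero_of_mul hp
    simp only [coe_image, Set.mem_image, mem_coe, mem_addAntidiagonal]
    exact ⟨(p, c - p), Finset.mem_addAntidiagonal.mpr ⟨h1, h2, by ring⟩, rfl⟩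
  rw [finsum_eq_sum_of_support_subset _ hsub]
  rw [Finset.sum_image (fun x hx y hy hxy => by
    rw [mem_coe] at hx hy
    replace hx := Finset.mem_addAntidiagonal.mp hx
    replace hy := Finset.mem_addAntidiagonal.mp hy
    exact Prod.ext hxy (by omega))]
  refine Finset.sum_congr rfl fun ij hij => ?_
  replace hij := Finset.mem_addAntidiagonal.mp hij
  have : c - ij.1 = ij.2 := by omega
  rw [this]

lemma support_coeff_mul_finite (A B : HahnSeries ℤ F) (c : ℤ) :
    (Function.support fun p : ℤ => A.coeff p * B.coeff (c - p)).Finite := by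
  classical
  apply Set.Finite.subset (Finset.finite_toSet
    ((addAntidiagonal A.isPWO_support B.isPWO_support c).image Prod.fst))
  intro p hp
  have h1 : A.coeff p ≠ 0 := left_ne_zero_of_mul hp
  have h2 : B.coeff (c - p) ≠ 0 := right_ne_zero_of_mul hp
  simp only [coe_image, Set.mem_image, mem_coe, mem_addAntidiagonal]
  exact ⟨(p, c - p), Finset.mem_addAntidiagonal.mpr ⟨h1, h2, by ring⟩, rfl⟩

lemma coeff_triple_finsum (A B C : HahnSeries ℤ F) :
    ∑ᶠ (p : ℤ) (q : ℤ), A.coeff p * (B.coeff q * C.coeff (-1 - p - q))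
      = (A * (B * C)).coeff (-1) := by
  have h : ∀ p : ℤ, ∑ᶠ q : ℤ, A.coeff p * (B.coeff q * C.coeff (-1 - p - q))
      = A.coeff p * (B * C).coeff (-1 - p) := by
    intro p
    rw [← coeff_mul_finsum B C (-1 - p),
      ← mul_finsum _ _]
  rw [finsum_congr h, coeff_mul_finsum]
lemma single_one_mul_coeff (a c : ℤ) (A : HahnSeries ℤ F) :
    (HahnSeries.single a (1:F) * A).coeff c = A.coeff (c - a) := by
  have h := HahnSeries.coeff_single_mul_add (b := a) (r := (1:F)) (x := A) (a := c - a)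
  rw [one_mul] at h
  have h2 : c - a + a = c := by ring
  rw [h2] at h
  exact h

lemma ofPowerSeries_coeff_neg (s : PowerSeries F) {m : ℤ} (hm : m < 0) :
    (HahnSeries.ofPowerSeries ℤ F s).coeff m = 0 := by
  rw [HahnSeries.ofPowerSeries_apply, HahnSeries.embDomain_notin_image_support]
  rintro ⟨k, -, hk⟩
  have : ((k : ℕ) : ℤ) = m := hk
  omega

lemma finsum_eq_fin_sum {N : ℕ} (f : ℤ → F) (h : ∀ p : ℤ, p < 0 ∨ (N:ℤ) ≤ p → f p = 0) :
    ∑ᶠ p : ℤ, f p = ∑ m : Fin N, f ((m : ℕ) : ℤ) := by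
  classical
  have hsub : Function.support f ⊆
      ↑((Finset.univ : Finset (Fin N)).image (fun m : Fin N => ((m : ℕ) : ℤ))) := by
    intro p hp
    rcases lt_or_ge p 0 with h0 | h0
    · exact absurd (h p (Or.inl h0)) hp
    rcases lt_or_ge p (N : ℤ) with h1 | h1
    · simp only [coe_image, Set.mem_image, mem_coe, Finset.mem_univ, coe_univ,
        Set.image_univ, Set.mem_range]
      exact ⟨⟨p.toNat, by omega⟩, by simp; omega⟩
    · exact absurd (h p (Or.inr h1)) hp
  rw [finsum_eq_sum_of_support_subset _ hsub,
    Finset.sum_image (fun x _ y _ hxy => Fin.ext (by exact_mod_cast hxy))]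
lemma psSmulLau_single_coeff (s : PowerSeries F) (a : ℤ) (v : g) (c : ℤ) :
    (psSmulLau s (HahnSeries.single a v)).coeff c
      = (HahnSeries.ofPowerSeries ℤ F s).coeff (c - a) • v := by
  classical
  rw [psSmulLau, HahnModule.coeff_smul]
  set Sh := HahnSeries.ofPowerSeries ℤ F s with hSh
  have hof : (HahnModule.of F).symm ((HahnModule.of F) (HahnSeries.single a v))
      = HahnSeries.single a v := Equiv.symm_apply_apply _ _
  refine (Finset.sum_subset (s₂ := {((c - a : ℤ), a)}) ?_ ?_).trans ?_
  · intro ij hij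
    rw [Finset.mem_vaddAntidiagonal] at hij
    obtain ⟨h1, h2, h3⟩ := hij
    rw [hof] at h2
    have h2' : ij.2 = a := HahnSeries.support_single_subset h2
    have h3' : ij.1 + ij.2 = c := h3
    rw [Finset.mem_singleton]
    exact Prod.ext (by omega) h2'
  · intro ij hij hnot
    rw [Finset.mem_singleton] at hij
    subst hij
    rw [Finset.mem_vaddAntidiagonal] at hnot
    simp only [hof, HahnSeries.mem_support, not_and] at hnot
    by_cases h1 : Sh.coeff (c - a) = 0
    · rw [h1, zero_smul]
    · rw [hof]
      by_cases h2 : (HahnSeries.single a v).coeff a = 0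
      · rw [h2, smul_zero]
      · exact absurd (show ((c - a : ℤ)) +ᵥ a = c from by
          show c - a + a = c; ring) (hnot h1 h2)
  · rw [Finset.sum_singleton, hof, HahnSeries.coeff_single_same]

lemma single_zero_mul_coeff' (e : F) (A : HahnSeries ℤ F) (m : ℤ) :
    (HahnSeries.single (0:ℤ) e * A).coeff m = e * A.coeff m := by
  have h := HahnSeries.coeff_single_mul_add (b := (0:ℤ)) (r := e) (x := A) (a := m)
  simpa using h

lemma hprod_rearr (α : LaurentSeries F) (s : PowerSeries F) {N : ℕ}
    (hαs : α * HahnSeries.ofPowerSeries ℤ F s = HahnSeries.single (-(N : ℤ)) 1)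
    (a a' : ℤ) :
    α * ((HahnSeries.single a (1:F) * HahnSeries.ofPowerSeries ℤ F s) *
        (HahnSeries.single a' (1:F) * HahnSeries.ofPowerSeries ℤ F s))
      = HahnSeries.single (a + a' + -(N:ℤ)) (1:F) * HahnSeries.ofPowerSeries ℤ F s := by
  set Sh := HahnSeries.ofPowerSeries ℤ F s with hSh
  calc α * ((HahnSeries.single a (1:F) * Sh) * (HahnSeries.single a' (1:F) * Sh))
      = HahnSeries.single a (1:F) * HahnSeries.single a' (1:F) * (α * Sh) * Sh := by ring
    _ = HahnSeries.single a (1:F) * HahnSeries.single a' (1:F) *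
          HahnSeries.single (-(N:ℤ)) (1:F) * Sh := by rw [hαs]
    _ = HahnSeries.single (a + a' + -(N:ℤ)) (1:F) * Sh := by
        rw [HahnSeries.single_mul_single, HahnSeries.single_mul_single, one_mul, one_mul]

lemma BLau_val (κ : g →ₗ[F] g →ₗ[F] F) (α : LaurentSeries F) (s : PowerSeries F) {N : ℕ}
    (hαs : α * HahnSeries.ofPowerSeries ℤ F s = HahnSeries.single (-(N : ℤ)) 1)
    (a a' : ℤ) (u v : g) :
    BLau κ α (psSmulLau s (HahnSeries.single a u)) (psSmulLau s (HahnSeries.single a' v))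
      = κ u v * (HahnSeries.ofPowerSeries ℤ F s).coeff ((N:ℤ) - 1 - a - a') := by
  set Sh := HahnSeries.ofPowerSeries ℤ F s with hSh
  set T := HahnSeries.single a (1:F) * Sh with hT
  set T' := HahnSeries.single a' (1:F) * Sh with hT'
  set e := κ u v with he
  set E := HahnSeries.single (0:ℤ) e * T' with hE
  have step1 : BLau κ α (psSmulLau s (HahnSeries.single a u)) (psSmulLau s (HahnSeries.single a' v))
      = ∑ᶠ (p : ℤ) (q : ℤ), α.coeff p * (T.coeff q * E.coeff (-1 - p - q)) := by
    rw [BLau]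
    refine finsum_congr fun p => finsum_congr fun q => ?_
    rw [psSmulLau_single_coeff, psSmulLau_single_coeff]
    simp only [map_smul, LinearMap.smul_apply, smul_eq_mul, hE, single_zero_mul_coeff',
      single_one_mul_coeff, hT, hT', he]
    ring
  rw [step1, coeff_triple_finsum]
  have h2 : α * (T * E) = HahnSeries.single (0:ℤ) e * (α * (T * T')) := by
    rw [hE]; ring
  rw [h2, single_zero_mul_coeff', hT, hT', hprod_rearr α s hαs, single_one_mul_coeff]
  congr 2
  ring

lemma psSmulTr_delta (s : PowerSeries F) (a : ℕ) (ha : a < n) (u : g) (m : Fin n) :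
    psSmulTr s (fun m' : Fin n => if (m' : ℕ) = a then u else 0) m
      = (HahnSeries.ofPowerSeries ℤ F s).coeff ((m : ℕ) - (a:ℤ)) • u := by
  classical
  rw [psSmulTr]
  rw [Finset.sum_eq_single (⟨a, ha⟩ : Fin n)]
  · simp only [Fin.val_mk, if_pos rfl, if_true]
    by_cases h : a ≤ (m : ℕ)
    · rw [if_pos h]
      have hc : ((m : ℕ) : ℤ) - (a : ℤ) = (((m : ℕ) - a : ℕ) : ℤ) := by omega
      rw [hc, HahnSeries.ofPowerSeries_apply_coeff]
    · rw [if_neg h, ofPowerSeries_coeff_neg _ (by omega), zero_smul]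
  · intro j _ hj
    have hne : (j : ℕ) ≠ a := fun hh => hj (Fin.ext (by simp [hh]))
    simp [hne]
  · intro hm
    exact absurd (Finset.mem_univ _) hm

lemma BTr_val (κ : g →ₗ[F] g →ₗ[F] F) (α : LaurentSeries F) (s : PowerSeries F) {N : ℕ}
    (hαs : α * HahnSeries.ofPowerSeries ℤ F s = HahnSeries.single (-(N : ℤ)) 1)
    (hαlow : ∀ k : ℤ, k < -(N : ℤ) → α.coeff k = 0)
    (hNn : N ≤ n)
    (a a' : ℕ) (ha : a < n) (ha' : a' < n) (u v : g) :
    BTr κ α (psSmulTr s (fun m' : Fin n => if (m' : ℕ) = a then u else 0))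
        (psSmulTr s (fun m' : Fin n => if (m' : ℕ) = a' then v else 0))
      = κ u v * (HahnSeries.ofPowerSeries ℤ F s).coeff ((N:ℤ) - 1 - a - a') := by
  classical
  set Sh := HahnSeries.ofPowerSeries ℤ F s with hSh
  set T := HahnSeries.single (a:ℤ) (1:F) * Sh with hT
  set T' := HahnSeries.single (a':ℤ) (1:F) * Sh with hT'
  set e := κ u v with he
  set E := HahnSeries.single (0:ℤ) e * T' with hE
  have hTc : ∀ c : ℤ, T.coeff c = Sh.coeff (c - a) := fun c => single_one_mul_coeff _ _ _
  have hT'c : ∀ c : ℤ, T'.coeff c = Sh.coeff (c - a') := fun c => single_one_mul_coeff _ _ _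
  have step1 : BTr κ α (psSmulTr s (fun m' : Fin n => if (m' : ℕ) = a then u else 0))
        (psSmulTr s (fun m' : Fin n => if (m' : ℕ) = a' then v else 0))
      = ∑ m : Fin n, ∑ m' : Fin n,
          T.coeff ((m : ℕ) : ℤ) * (E.coeff ((m' : ℕ) : ℤ) *
            α.coeff (-1 - ((m : ℕ) : ℤ) - ((m' : ℕ) : ℤ))) := by
    rw [BTr]
    refine Finset.sum_congr rfl fun m _ => Finset.sum_congr rfl fun m' _ => ?_
    rw [psSmulTr_delta s a ha, psSmulTr_delta s a' ha']
    simp only [map_smul, LinearMap.smul_apply, smul_eq_mul, hE, single_zero_mul_coeff',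
      hTc, hT'c, he]
    ring
  -- vanishing facts
  have hTneg : ∀ p : ℤ, p < 0 → T.coeff p = 0 := by
    intro p hp; rw [hTc]; exact ofPowerSeries_coeff_neg _ (by omega)
  have hEneg : ∀ p : ℤ, p < 0 → E.coeff p = 0 := by
    intro p hp; rw [hE, single_zero_mul_coeff', hT'c]
    rw [ofPowerSeries_coeff_neg _ (by omega), mul_zero]
  have hinner : ∀ m : Fin n,
      ∑ᶠ q : ℤ, T.coeff ((m : ℕ) : ℤ) * (E.coeff q * α.coeff (-1 - ((m : ℕ) : ℤ) - q))
        = ∑ m' : Fin n, T.coeff ((m : ℕ) : ℤ) * (E.coeff ((m' : ℕ) : ℤ) *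
            α.coeff (-1 - ((m : ℕ) : ℤ) - ((m' : ℕ) : ℤ))) := by
    intro m
    refine finsum_eq_fin_sum _ fun q hq => ?_
    rcases hq with hq | hq
    · rw [hEneg q hq, zero_mul, mul_zero]
    · rw [hαlow (-1 - ((m : ℕ) : ℤ) - q) (by omega), mul_zero, mul_zero]
  have houter : ∑ᶠ (p : ℤ) (q : ℤ), T.coeff p * (E.coeff q * α.coeff (-1 - p - q))
      = ∑ m : Fin n, ∑ᶠ q : ℤ, T.coeff ((m : ℕ) : ℤ) *
          (E.coeff q * α.coeff (-1 - ((m : ℕ) : ℤ) - q)) := by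
    refine finsum_eq_fin_sum _ fun p hp => ?_
    rcases hp with hp | hp
    · refine finsum_eq_zero_of_forall_eq_zero fun q => ?_
      rw [hTneg p hp, zero_mul]
    · refine finsum_eq_zero_of_forall_eq_zero fun q => ?_
      rcases lt_or_ge q 0 with hq | hq
      · rw [hEneg q hq, zero_mul, mul_zero]
      · rw [hαlow (-1 - p - q) (by omega), mul_zero, mul_zero]
  rw [step1, ← Finset.sum_congr rfl (fun m _ => hinner m), ← houter, coeff_triple_finsum]
  have h2 : T * (E * α) = HahnSeries.single (0:ℤ) e * (α * (T * T')) := by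
    rw [hE]; ring
  rw [h2, single_zero_mul_coeff', hT, hT', hprod_rearr α s hαs, single_one_mul_coeff]
  congr 2
  omega

lemma psSmulLau_zero (s : PowerSeries F) : psSmulLau s (0 : HahnSeries ℤ g) = 0 := by
  rw [psSmulLau]
  rw [show (HahnModule.of F) (0 : HahnSeries ℤ g) = 0 from rfl, smul_zero]
  rfl

lemma psSmulTr_zero (s : PowerSeries F) : psSmulTr s (0 : Fin n → g) = 0 := by
  funext m; simp [psSmulTr]

lemma BLau_zero_left (κ : g →ₗ[F] g →ₗ[F] F) (α : LaurentSeries F) (v : HahnSeries ℤ g) :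
    BLau κ α 0 v = 0 := by simp [BLau]

lemma BLau_zero_right (κ : g →ₗ[F] g →ₗ[F] F) (α : LaurentSeries F) (u : HahnSeries ℤ g) :
    BLau κ α u 0 = 0 := by simp [BLau]

lemma BTr_zero_left (κ : g →ₗ[F] g →ₗ[F] F) (α : LaurentSeries F) (q : Fin n → g) :
    BTr κ α 0 q = 0 := by simp [BTr]

lemma BTr_zero_right (κ : g →ₗ[F] g →ₗ[F] F) (α : LaurentSeries F) (p : Fin n → g) :
    BTr κ α p 0 = 0 := by simp [BTr]

end AuxLemmas

/-- With `s = 1/(xⁿα(x)) = ∑ s_k x^k`, the pairings of the rescaled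
elements `s·w_{k,i}` are `B(s·w_{k,i}, s·w_{l,j}) = −s_{k+l−n+1}` for `i=j`,
`k,l ≤ n−1`, `k+l ≥ n−1`; `= s_{k+l−n+1}` for `i=j`, `k,l ≥ n`; and `= 0` otherwise. -/
theorem stmt6 (n : ℕ) (b : Module.Basis (Fin d) F g) (κ : g →ₗ[F] g →ₗ[F] F)
    (hκsymm : ∀ x y : g, κ x y = κ y x)
    (hκinv : ∀ x y z : g, κ ⁅x, y⁆ z = κ x ⁅y, z⁆)
    (horth : ∀ i j : Fin d, κ (b i) (b j) = if i = j then 1 else 0)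
    (α : LaurentSeries F) (s : PowerSeries F)
    (hs0 : PowerSeries.constantCoeff s ≠ 0)
    (hαlow : ∀ k : ℤ, k < -(n : ℤ) → α.coeff k = 0)
    (hαs : α * HahnSeries.ofPowerSeries ℤ F s = HahnSeries.single (-(n : ℤ)) 1) :
    ∀ (k l : ℕ) (i j : Fin d),
      BB κ α (psSmulLL s (wElt g n (⇑b) k i)) (psSmulLL s (wElt g n (⇑b) l j))
        = if i = j ∧ k < n ∧ l < n ∧ n ≤ k + l + 1
            then -(PowerSeries.coeff (k + l + 1 - n) s)
          else if i = j ∧ n ≤ k ∧ n ≤ l then PowerSeries.coeff (k + l + 1 - n) s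
          else 0 := by
  intro k l i j
  rcases Nat.lt_or_ge k n with hk | hk <;> rcases Nat.lt_or_ge l n with hl | hl
  · -- both truncated
    simp only [wElt, if_pos hk, if_pos hl, psSmulLL, BB]
    rw [psSmulLau_zero, BLau_zero_left,
      BTr_val κ α s hαs hαlow le_rfl (n - 1 - k) (n - 1 - l) (by omega) (by omega)]
    simp only [map_neg, LinearMap.neg_apply, neg_neg]
    rw [horth i j]
    have hE : (n : ℤ) - 1 - ((n - 1 - k : ℕ) : ℤ) - ((n - 1 - l : ℕ) : ℤ)
        = (k : ℤ) + l + 1 - n := by omega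
    rw [hE]
    by_cases hij : i = j
    · rw [if_pos hij]
      by_cases hkl : n ≤ k + l + 1
      · have hc : (k : ℤ) + l + 1 - n = ((k + l + 1 - n : ℕ) : ℤ) := by omega
        rw [hc, HahnSeries.ofPowerSeries_apply_coeff,
          if_pos (show i = j ∧ k < n ∧ l < n ∧ n ≤ k + l + 1 from ⟨hij, hk, hl, hkl⟩)]
        ring
      · rw [ofPowerSeries_coeff_neg _ (by omega),
          if_neg (show ¬(i = j ∧ k < n ∧ l < n ∧ n ≤ k + l + 1) from fun h => hkl h.2.2.2),
          if_neg (show ¬(i = j ∧ n ≤ k ∧ n ≤ l) from fun h => absurd h.2.1 (by omega))]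
        ring
    · rw [if_neg hij,
        if_neg (show ¬(i = j ∧ k < n ∧ l < n ∧ n ≤ k + l + 1) from fun h => hij h.1),
        if_neg (show ¬(i = j ∧ n ≤ k ∧ n ≤ l) from fun h => hij h.1)]
      ring
  · -- k truncated, l Laurent : zero
    simp only [wElt, if_pos hk, if_neg (by omega : ¬ l < n), psSmulLL, BB]
    rw [psSmulLau_zero, BLau_zero_left, psSmulTr_zero, BTr_zero_right,
      if_neg (show ¬(i = j ∧ k < n ∧ l < n ∧ n ≤ k + l + 1) from fun h => absurd h.2.2.1 (by omega)),
      if_neg (show ¬(i = j ∧ n ≤ k ∧ n ≤ l) from fun h => absurd h.2.1 (by omega))]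
    ring
  · -- k Laurent, l truncated : zero
    simp only [wElt, if_neg (by omega : ¬ k < n), if_pos hl, psSmulLL, BB]
    rw [psSmulTr_zero, BTr_zero_left, psSmulLau_zero, BLau_zero_right,
      if_neg (show ¬(i = j ∧ k < n ∧ l < n ∧ n ≤ k + l + 1) from fun h => absurd h.2.1 (by omega)),
      if_neg (show ¬(i = j ∧ n ≤ k ∧ n ≤ l) from fun h => absurd h.2.2 (by omega))]
    ring
  · -- both Laurent
    simp only [wElt, if_neg (by omega : ¬ k < n), if_neg (by omega : ¬ l < n), psSmulLL, BB]
    rw [psSmulTr_zero, BTr_zero_left, BLau_val κ α s hαs, horth i j]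
    have hE : (n : ℤ) - 1 - ((n : ℤ) - 1 - k) - ((n : ℤ) - 1 - l)
        = ((k + l + 1 - n : ℕ) : ℤ) := by omega
    rw [hE, HahnSeries.ofPowerSeries_apply_coeff]
    by_cases hij : i = j
    · rw [if_pos hij,
        if_neg (show ¬(i = j ∧ k < n ∧ l < n ∧ n ≤ k + l + 1) from fun h => absurd h.2.1 (by omega)),
        if_pos (show i = j ∧ n ≤ k ∧ n ≤ l from ⟨hij, hk, hl⟩)]
      ring
    · rw [if_neg hij,
        if_neg (show ¬(i = j ∧ k < n ∧ l < n ∧ n ≤ k + l + 1) from fun h => hij h.1),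
        if_neg (show ¬(i = j ∧ n ≤ k ∧ n ≤ l) from fun h => hij h.1)]
      ring


end ManinCore
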